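/- Let g be a standard Gaussian random variable and λ ∈ (0, 1/2), r ≥ e, with λ = (2 + r²/ln r)^{-1}. Then ∫_1^∞ P{exp(λ · max(0, g−r)²) ≥ τ} dτ ≤ exp(−r²/2) + 2λ r^{1 − 1/(2λ)} / (1 − 2λ) ≤ 2 exp(−r²/2). -/

import Mathlib

open MeasureTheory ProbabilityTheory Real Set Filter Topology

lemma exp_int_aux {t : ℝ} (ht : 0 < t) :
    ∫ x in Ioi t, Real.exp (-t * x) = Real.exp (-t * t) / t := by
  have hderiv : ∀ x ∈ Ici t, HasDerivAt (fun x => -Real.exp (-t * x) / t)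
      (Real.exp (-t * x)) x := by
    intro x _
    have h1 : HasDerivAt (fun x : ℝ => -t * x) (-t) x := by
      simpa using (hasDerivAt_id x).const_mul (-t)
    have h2 := (h1.exp.neg).div_const t
    convert h2 using 1
    · rfl
    · rfl
    · rfl
    · field_simp
  have h3 : Tendsto (fun x : ℝ => t * x) atTop atTop :=
    Tendsto.const_mul_atTop ht tendsto_id
  have h4 := Real.tendsto_exp_neg_atTop_nhds_zero.comp h3
  have h5 : Tendsto (fun x : ℝ => Real.exp (-t * x)) atTop (𝓝 0) := by
    simpa [Function.comp_def, neg_mul] using h4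
  have htend : Tendsto (fun x => -Real.exp (-t * x) / t) atTop (𝓝 (-0 / t)) :=
    (h5.neg).div_const t
  have := integral_Ioi_of_hasDerivAt_of_tendsto' hderiv
    (exp_neg_integrableOn_Ioi t ht) htend
  rw [this]
  field_simp
  ring

lemma gauss_tail {t : ℝ} (ht : 1 ≤ t) :
    ((gaussianReal 0 1) {x : ℝ | t ≤ x}).toReal ≤ Real.exp (-t ^ 2 / 2) := by
  have ht0 : (0 : ℝ) < t := by linarith
  have hset : {x : ℝ | t ≤ x} = Ici t := rfl
  have hc : (0:ℝ) < Real.sqrt (2 * π) := Real.sqrt_pos.2 (by positivity)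
  rw [ProbabilityTheory.gaussianReal_apply_eq_integral 0 one_ne_zero, hset,
    ENNReal.toReal_ofReal (setIntegral_nonneg measurableSet_Ici
      (fun x _ => gaussianPDFReal_nonneg _ _ _))]
  rw [integral_Ici_eq_integral_Ioi]
  have hbound : ∀ x : ℝ, gaussianPDFReal 0 1 x ≤
      (Real.sqrt (2 * π))⁻¹ * Real.exp (t ^ 2 / 2) * Real.exp (-t * x) := by
    intro x
    have : gaussianPDFReal 0 1 x = (Real.sqrt (2 * π))⁻¹ * Real.exp (-x ^ 2 / 2) := by
      simp [gaussianPDFReal]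
    rw [this, mul_assoc, ← Real.exp_add]
    exact mul_le_mul_of_nonneg_left
      (Real.exp_le_exp.2 (by nlinarith [sq_nonneg (x - t)])) (inv_nonneg.2 hc.le)
  have hint : IntegrableOn (fun x : ℝ =>
      (Real.sqrt (2 * π))⁻¹ * Real.exp (t ^ 2 / 2) * Real.exp (-t * x)) (Ioi t) :=
    (exp_neg_integrableOn_Ioi t ht0).const_mul _
  have hmono : ∫ x in Ioi t, gaussianPDFReal 0 1 x ≤
      ∫ x in Ioi t, (Real.sqrt (2 * π))⁻¹ * Real.exp (t ^ 2 / 2) * Real.exp (-t * x) :=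
    setIntegral_mono_on (integrable_gaussianPDFReal 0 1).integrableOn hint
      measurableSet_Ioi (fun x _ => hbound x)
  refine hmono.trans ?_
  rw [integral_const_mul, exp_int_aux ht0]
  have e : Real.exp (t ^ 2 / 2) * Real.exp (-t * t) = Real.exp (-t ^ 2 / 2) := by
    rw [← Real.exp_add]; ring_nf
  have hE : (Real.sqrt (2 * π))⁻¹ * Real.exp (t ^ 2 / 2) * (Real.exp (-t * t) / t)
      = Real.exp (-t ^ 2 / 2) * ((Real.sqrt (2 * π))⁻¹ * t⁻¹) := by
    rw [← e]; ring
  rw [hE]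
  have h2pi : (1:ℝ) ≤ Real.sqrt (2 * π) := by
    rw [show (1:ℝ) = Real.sqrt 1 by simp]
    exact Real.sqrt_le_sqrt (by nlinarith [Real.pi_gt_three])
  calc Real.exp (-t ^ 2 / 2) * ((Real.sqrt (2 * π))⁻¹ * t⁻¹)
      ≤ Real.exp (-t ^ 2 / 2) * 1 := by
        refine mul_le_mul_of_nonneg_left ?_ (Real.exp_nonneg _)
        rw [← mul_inv]
        refine inv_le_one_of_one_le₀ ?_
        nlinarith
    _ = Real.exp (-t ^ 2 / 2) := mul_one _

theorem truncated_gaussian_laplace_tail_bound (r lam : ℝ) (hr : Real.exp 1 ≤ r)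
    (hlam : lam ∈ Set.Ioo (0 : ℝ) (1 / 2))
    (hlamdef : lam = (2 + r ^ 2 / Real.log r)⁻¹) :
    (∫ τ in Set.Ioi (1 : ℝ),
        ((gaussianReal 0 1) {g : ℝ | τ ≤ Real.exp (lam * max 0 (g - r) ^ 2)}).toReal) ≤
      Real.exp (-r ^ 2 / 2) + 2 * lam * r ^ (1 - 1 / (2 * lam)) / (1 - 2 * lam) ∧
    Real.exp (-r ^ 2 / 2) + 2 * lam * r ^ (1 - 1 / (2 * lam)) / (1 - 2 * lam) ≤
      2 * Real.exp (-r ^ 2 / 2) := by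
  obtain ⟨hlam0, hlam2⟩ := hlam
  have hr1 : (1:ℝ) < r := lt_of_lt_of_le (by nlinarith [Real.exp_one_gt_d9]) hr
  have hr0 : (0:ℝ) < r := by linarith
  have hlogr : (1:ℝ) ≤ Real.log r := by
    calc (1:ℝ) = Real.log (Real.exp 1) := (Real.log_exp 1).symm
    _ ≤ Real.log r := Real.log_le_log (Real.exp_pos 1) hr
  have hlogr0 : (0:ℝ) < Real.log r := by linarith
  have hinv : lam⁻¹ = 2 + r ^ 2 / Real.log r := by rw [hlamdef, inv_inv]
  have hkey : 1 / (2 * lam) - 1 = r ^ 2 / (2 * Real.log r) := by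
    rw [show (1:ℝ)/(2*lam) = lam⁻¹/2 by rw [one_div, mul_inv]; ring, hinv]
    field_simp
    ring
  have hpow : r ^ (1 - 1 / (2 * lam)) = Real.exp (-r ^ 2 / 2) := by
    rw [Real.rpow_def_of_pos hr0]
    congr 1
    have h1 : 1 - 1/(2*lam) = -(r^2/(2*Real.log r)) := by linarith
    rw [h1]
    field_simp
  have hlam4 : lam ≤ 1/4 := by
    rw [hlamdef]
    have h2 : (2:ℝ) ≤ r^2 / Real.log r := by
      rw [le_div_iff₀ hlogr0]
      nlinarith [Real.log_le_sub_one_of_pos hr0]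
    calc (2 + r ^ 2 / Real.log r)⁻¹ ≤ (4:ℝ)⁻¹ := by
          apply inv_anti₀ (by norm_num) (by linarith)
      _ = 1/4 := by norm_num
  have hE : (0:ℝ) < Real.exp (-r ^ 2 / 2) := Real.exp_pos _
  constructor
  · -- main integral bound
    set a : ℝ := -(1/(2*lam)) with ha_def
    have ha : a < -1 := by
      have : (1:ℝ) < 1/(2*lam) := (one_lt_one_div (by linarith) (by linarith))
      simp only [ha_def]; linarith
    have hle : ∀ τ ∈ Set.Ioi (1:ℝ),
        ((gaussianReal 0 1) {g : ℝ | τ ≤ Real.exp (lam * max 0 (g - r) ^ 2)}).toReal ≤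
          Real.exp (-r ^ 2 / 2) * τ ^ a := by
      intro τ hτ
      rw [Set.mem_Ioi] at hτ
      have hτ0 : (0:ℝ) < τ := by linarith
      have hlogτ : (0:ℝ) < Real.log τ := Real.log_pos hτ
      set s : ℝ := Real.sqrt (Real.log τ / lam) with hs_def
      have hs0 : (0:ℝ) < s := Real.sqrt_pos.2 (div_pos hlogτ hlam0)
      have hsub : {g : ℝ | τ ≤ Real.exp (lam * max 0 (g - r) ^ 2)} ⊆ {x : ℝ | r + s ≤ x} := by
        intro g hg
        simp only [Set.mem_setOf_eq] at hg ⊢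
        have h1 : Real.log τ ≤ lam * max 0 (g - r) ^ 2 :=
          (Real.log_le_iff_le_exp hτ0).2 hg
        have h2 : Real.log τ / lam ≤ max 0 (g - r) ^ 2 := (div_le_iff₀' hlam0).2 h1
        have h3 : s ≤ max 0 (g - r) := by
          calc s ≤ Real.sqrt (max 0 (g - r) ^ 2) := Real.sqrt_le_sqrt h2
            _ = max 0 (g - r) := Real.sqrt_sq (le_max_left 0 _)
        have h4 : 0 < g - r := by
          rcases (lt_max_iff.1 (lt_of_lt_of_le hs0 h3)) with h | h
          · exact absurd h (lt_irrefl 0)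
          · exact h
        rw [max_eq_right h4.le] at h3
        linarith
      have hm := ENNReal.toReal_mono (measure_ne_top (gaussianReal 0 1) _)
        (measure_mono hsub)
      refine hm.trans ?_
      refine (gauss_tail (by linarith : 1 ≤ r + s)).trans ?_
      rw [Real.rpow_def_of_pos hτ0, ← Real.exp_add]
      apply Real.exp_le_exp.2
      have hs2 : s^2 = Real.log τ / lam := Real.sq_sqrt (div_pos hlogτ hlam0).le
      have h5 : Real.log τ * a = -(s^2)/2 := by
        rw [hs2, ha_def]
        field_simp
      nlinarith [mul_nonneg hr0.le hs0.le]
    have hg_int : IntegrableOn (fun τ : ℝ => Real.exp (-r ^ 2 / 2) * τ ^ a) (Set.Ioi 1) :=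
      (integrableOn_Ioi_rpow_of_lt ha one_pos).const_mul _
    have hmono := integral_mono_of_nonneg
      (ae_of_all _ (fun τ => ENNReal.toReal_nonneg))
      hg_int
      ((ae_restrict_iff' measurableSet_Ioi).2 (ae_of_all _ hle))
    rw [integral_const_mul, integral_Ioi_rpow_of_lt ha one_pos, Real.one_rpow] at hmono
    refine hmono.trans ?_
    have hne2 : (1:ℝ) - 2 * lam ≠ 0 := by intro h; nlinarith
    have hAne : a + 1 ≠ 0 := by intro h; linarith
    have hval2 : -1 / (a + 1) = 2 * lam / (1 - 2 * lam) := by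
      rw [div_eq_div_iff hAne hne2, ha_def]
      field_simp
      ring
    rw [hval2, hpow]
    have heq : Real.exp (-r ^ 2 / 2) * (2 * lam / (1 - 2 * lam)) =
        2 * lam * Real.exp (-r ^ 2 / 2) / (1 - 2 * lam) := by ring
    rw [heq]
    linarith
  · rw [hpow]
    have h7 : 2 * lam * Real.exp (-r ^ 2 / 2) / (1 - 2 * lam) ≤ Real.exp (-r ^ 2 / 2) := by
      rw [div_le_iff₀ (by linarith : (0:ℝ) < 1 - 2 * lam)]
      nlinarith
    linarith
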